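/- Let m and n be integers with 2 ≤ 2m < n+1. There exists a constant C(n,m) > 0 depending only on n and m such that for every f ∈ L¹(ℝ^n) and every λ > 0, the Lebesgue measure of the set {(x,t) ∈ ℝ^{n+1}_+ : |(N_m * f)(x,t)| > λ} is at most C(n,m) λ^{−(n+1)/(n−2m+1)} ‖f‖_{L¹(ℝ^n)}^{(n+1)/(n−2m+1)}; that is, N_m * f belongs to weak-L^{(n+1)/(n−2m+1)}(ℝ^{n+1}_+). -/

import Mathlib

open MeasureTheory Filter Asymptotics
open scoped Topology ENNReal

noncomputable section

/-- Points of `ℝ^{n+1}` are written `X = (x, t)` with `x ∈ ℝ^n` and `t ∈ ℝ`. -/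
abbrev Pt (n : ℕ) := (EuclideanSpace ℝ (Fin n)) × ℝ

/-- The Laplacian on `ℝ^{n+1} = ℝ^n × ℝ`, computed as the sum of the second partial
derivatives in the coordinate directions. -/
def lap (n : ℕ) (f : Pt n → ℝ) : Pt n → ℝ := fun X =>
  (∑ i : Fin n,
      fderiv ℝ (fun Y => fderiv ℝ f Y ((EuclideanSpace.single i (1:ℝ)), (0:ℝ))) X
        ((EuclideanSpace.single i (1:ℝ)), (0:ℝ)))
    + fderiv ℝ (fun Y => fderiv ℝ f Y ((0 : EuclideanSpace ℝ (Fin n)), (1:ℝ))) X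
        ((0 : EuclideanSpace ℝ (Fin n)), (1:ℝ))

/-- `lapIter n m f = Δ^m f`. -/
def lapIter (n m : ℕ) (f : Pt n → ℝ) : Pt n → ℝ := (lap n)^[m] f

/-- `∂_t f`, the partial derivative in the last (`t`) variable. -/
def dt (n : ℕ) (f : Pt n → ℝ) (X : Pt n) : ℝ :=
  fderiv ℝ f X ((0 : EuclideanSpace ℝ (Fin n)), (1:ℝ))

/-- The Neumann-type kernel `N_m(x,t) = γ(n,m) (|x|² + t²)^{-(n-2m+1)/2}`, with
`γ(n,m) = π^{(n+1)/2} Γ((n-2m+1)/2) / Γ(m)`. -/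
def Nker (n m : ℕ) (x : EuclideanSpace ℝ (Fin n)) (t : ℝ) : ℝ :=
  (Real.pi ^ (((n:ℝ) + 1)/2) * Real.Gamma (((n:ℝ) - 2*m + 1)/2) / Real.Gamma (m:ℝ)) *
    (‖x‖^2 + t^2) ^ (-(((n:ℝ) - 2*m + 1)/2))

/-- The convolution `(N_m * f)(x,t) = ∫_{ℝ^n} N_m(x-y, t) f(y) dy`. -/
def Nconv (n m : ℕ) (f : EuclideanSpace ℝ (Fin n) → ℝ) (X : Pt n) : ℝ :=
  ∫ y : EuclideanSpace ℝ (Fin n), Nker n m (X.1 - y) X.2 * f y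

open Set in
lemma auxKey (n : ℕ) (hn : 0 < n) (y : EuclideanSpace ℝ (Fin n)) {φ : Pt n → ℝ}
    {s R : ℝ} (hR : 0 ≤ R)
    (hsub : ∀ X : Pt n, 0 < X.2 → s < φ X → ‖X.1 - y‖^2 + X.2^2 < R^2) :
    (volume.restrict {X : Pt n | 0 < X.2}) {X | s < φ X}
      ≤ ENNReal.ofReal (R^(n+1) * (Real.sqrt Real.pi ^ n / Real.Gamma ((n:ℝ)/2+1))) := by
  haveI : Nonempty (Fin n) := ⟨⟨0, hn⟩⟩
  have hH : MeasurableSet {X : Pt n | 0 < X.2} :=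
    (isOpen_lt continuous_const continuous_snd).measurableSet
  rw [Measure.restrict_apply' hH]
  refine le_trans (measure_mono (t := Metric.ball y R ×ˢ Set.Ioo (0:ℝ) R) ?_) ?_
  · rintro X ⟨h1, h2⟩
    have hlt := hsub X h2 h1
    have hx : X.1 ∈ Metric.ball y R := by
      rw [mem_ball_iff_norm]
      exact lt_of_pow_lt_pow_left₀ 2 hR (by nlinarith [sq_nonneg X.2])
    have ht : X.2 ∈ Ioo (0:ℝ) R :=
      ⟨h2, lt_of_pow_lt_pow_left₀ 2 hR (by nlinarith [sq_nonneg ‖X.1 - y‖])⟩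
    exact Set.mem_prod.mpr ⟨hx, ht⟩
  · rw [Measure.volume_eq_prod, Measure.prod_prod, EuclideanSpace.volume_ball, Real.volume_Ioo]
    simp only [Fintype.card_fin]
    rw [← ENNReal.ofReal_pow hR, ← ENNReal.ofReal_mul (by positivity),
      ← ENNReal.ofReal_mul (by positivity)]
    apply ENNReal.ofReal_le_ofReal
    rw [sub_zero]
    have hG : (0:ℝ) < Real.Gamma ((n:ℝ)/2+1) := Real.Gamma_pos_of_pos (by positivity)
    have hc : (0:ℝ) ≤ Real.sqrt Real.pi ^ n / Real.Gamma ((n:ℝ)/2+1) :=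
      div_nonneg (pow_nonneg (Real.sqrt_nonneg _) n) hG.le
    have : R^n * (Real.sqrt Real.pi ^ n / Real.Gamma ((n:ℝ)/2+1)) * R
        = R^(n+1) * (Real.sqrt Real.pi ^ n / Real.Gamma ((n:ℝ)/2+1)) := by ring
    linarith [this.le]

open Set in
lemma auxJ (n : ℕ) (hn : 0 < n) {γ a M β : ℝ} (hγ : 0 < γ) (ha : 0 < a) (hM : 0 < M)
    (hβ : β = ((n:ℝ)+1)/(2*a)) (hβ1 : 1 < β) (y : EuclideanSpace ℝ (Fin n)) :
    (∫⁻ X : Pt n in {X : Pt n | 0 < X.2},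
      ENNReal.ofReal (if ‖X.1 - y‖^2 + X.2^2 < (γ/M)^(1/a) then
        γ * ((‖X.1 - y‖^2 + X.2^2) ^ (-a)) else 0))
      ≤ ENNReal.ofReal ((Real.sqrt Real.pi ^ n / Real.Gamma ((n:ℝ)/2+1)) *
          (γ^β * (M^(1-β) * (1 + 1/(β-1))))) := by
  set Cn : ℝ := Real.sqrt Real.pi ^ n / Real.Gamma ((n:ℝ)/2+1) with hCn_def
  have hG : (0:ℝ) < Real.Gamma ((n:ℝ)/2+1) := Real.Gamma_pos_of_pos (by positivity)
  have hCn : 0 ≤ Cn := div_nonneg (pow_nonneg (Real.sqrt_nonneg _) n) hG.le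
  have hH : MeasurableSet {X : Pt n | 0 < X.2} :=
    (isOpen_lt continuous_const continuous_snd).measurableSet
  set T : ℝ := (γ/M)^(1/a) with hT_def
  set φ : Pt n → ℝ := fun X => if ‖X.1 - y‖^2 + X.2^2 < T then
      γ * ((‖X.1 - y‖^2 + X.2^2) ^ (-a)) else 0 with hφ_def
  have hρm : Measurable (fun X : Pt n => ‖X.1 - y‖^2 + X.2^2) := by fun_prop
  have hφm : Measurable φ := by
    apply Measurable.ite (measurableSet_lt hρm measurable_const) ?_ measurable_const
    exact (hρm.pow measurable_const).const_mul γ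
  have hφnn : ∀ X, 0 ≤ φ X := by
    intro X
    simp only [hφ_def]
    split
    · exact mul_nonneg hγ.le (Real.rpow_nonneg (by positivity) _)
    · exact le_rfl
  -- the scaling identity
  have hRsq : ∀ s : ℝ, 0 < s → ((γ/s)^(1/(2*a)))^2 = (γ/s)^(1/a) := by
    intro s hs
    rw [← Real.rpow_natCast ((γ/s)^(1/(2*a))) 2, ← Real.rpow_mul (by positivity)]
    congr 1
    push_cast
    field_simp
  have hRpow : ∀ s : ℝ, 0 < s → ((γ/s)^(1/(2*a)))^(n+1) = γ^β * s^(-β) := by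
    intro s hs
    rw [← Real.rpow_natCast ((γ/s)^(1/(2*a))) (n+1), ← Real.rpow_mul (by positivity)]
    have h1 : (1/(2*a)) * (((n+1 : ℕ)) : ℝ) = β := by
      rw [hβ]; push_cast; field_simp
    rw [h1, Real.div_rpow hγ.le hs.le, Real.rpow_neg hs.le, div_eq_mul_inv]
  -- superlevel control
  have hsup : ∀ s : ℝ, 0 < s → ∀ X : Pt n, s < φ X →
      (‖X.1 - y‖^2 + X.2^2 < T ∧ ‖X.1 - y‖^2 + X.2^2 < (γ/s)^(1/a)) := by
    intro s hs X hX
    simp only [hφ_def] at hX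
    split at hX
    · rename_i hin
      refine ⟨hin, ?_⟩
      by_contra hcon
      push_neg at hcon
      have hpos : (0:ℝ) < (γ/s)^(1/a) := Real.rpow_pos_of_pos (by positivity) _
      have h1 : (‖X.1 - y‖^2 + X.2^2) ^ (-a) ≤ ((γ/s)^(1/a)) ^ (-a) :=
        Real.rpow_le_rpow_of_nonpos hpos hcon (by linarith)
      have h2 : ((γ/s)^(1/a) : ℝ) ^ (-a) = s/γ := by
        rw [← Real.rpow_mul (by positivity)]
        rw [show (1/a) * (-a) = (-1 : ℝ) by field_simp]
        rw [Real.rpow_neg_one, inv_div]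
      have h3 : γ * (‖X.1 - y‖^2 + X.2^2) ^ (-a) ≤ s := by
        calc γ * (‖X.1 - y‖^2 + X.2^2) ^ (-a) ≤ γ * ((γ/s)^(1/a)) ^ (-a) := by
              exact mul_le_mul_of_nonneg_left h1 hγ.le
          _ = s := by rw [h2]; field_simp
      linarith
    · linarith
  -- layer cake
  rw [lintegral_eq_lintegral_meas_lt _ (Filter.Eventually.of_forall hφnn) hφm.aemeasurable]
  set ν := volume.restrict {X : Pt n | 0 < X.2} with hν_def
  have key : ∀ s : ℝ, 0 < s → ∀ R : ℝ, 0 ≤ R →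
      (∀ X : Pt n, 0 < X.2 → s < φ X → ‖X.1 - y‖^2 + X.2^2 < R^2) →
      ν {X | s < φ X} ≤ ENNReal.ofReal (R^(n+1) * Cn) :=
    fun s hs R hR h => auxKey n hn y hR h
  rw [← Set.Ioc_union_Ioi_eq_Ioi hM.le, lintegral_union measurableSet_Ioi Set.Ioc_disjoint_Ioi_same]
  have hbm1 : β - 1 ≠ 0 := by linarith
  have h1 : (∫⁻ s in Set.Ioc (0:ℝ) M, ν {X | s < φ X})
      ≤ ENNReal.ofReal (((γ/M)^(1/(2*a)))^(n+1) * Cn) * ENNReal.ofReal M := by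
    calc (∫⁻ s in Set.Ioc (0:ℝ) M, ν {X | s < φ X})
        ≤ ∫⁻ _ in Set.Ioc (0:ℝ) M, ENNReal.ofReal (((γ/M)^(1/(2*a)))^(n+1) * Cn) := by
          refine setLIntegral_mono' measurableSet_Ioc fun s hs => ?_
          refine key s hs.1 _ (Real.rpow_nonneg (by positivity) _) ?_
          intro X _ hXφ
          rw [hRsq M hM]
          exact (hsup s hs.1 X hXφ).1
      _ = ENNReal.ofReal (((γ/M)^(1/(2*a)))^(n+1) * Cn) * ENNReal.ofReal M := by
          rw [setLIntegral_const, Real.volume_Ioc, sub_zero]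
  have h2 : (∫⁻ s in Set.Ioi M, ν {X | s < φ X})
      ≤ ENNReal.ofReal (Cn * γ^β) * ENNReal.ofReal (M^(1-β)/(β-1)) := by
    have hstep : ∀ s ∈ Set.Ioi M, ν {X | s < φ X}
        ≤ ENNReal.ofReal (Cn * γ^β) * ENNReal.ofReal (s^(-β)) := by
      intro s hs
      have hs0 : 0 < s := hM.trans hs
      have hkey := key s hs0 ((γ/s)^(1/(2*a))) (Real.rpow_nonneg (by positivity) _) ?_
      · refine hkey.trans (le_of_eq ?_)
        rw [hRpow s hs0, ← ENNReal.ofReal_mul (by positivity)]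
        congr 1
        ring
      · intro X _ hXφ
        rw [hRsq s hs0]
        exact (hsup s hs0 X hXφ).2
    calc (∫⁻ s in Set.Ioi M, ν {X | s < φ X})
        ≤ ∫⁻ s in Set.Ioi M, ENNReal.ofReal (Cn * γ^β) * ENNReal.ofReal (s^(-β)) :=
          setLIntegral_mono' measurableSet_Ioi hstep
      _ = ENNReal.ofReal (Cn * γ^β) * ∫⁻ s in Set.Ioi M, ENNReal.ofReal (s^(-β)) :=
          lintegral_const_mul' _ _ ENNReal.ofReal_ne_top
      _ = ENNReal.ofReal (Cn * γ^β) * ENNReal.ofReal (M^(1-β)/(β-1)) := by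
          congr 1
          rw [← ofReal_integral_eq_lintegral_ofReal
            (integrableOn_Ioi_rpow_of_lt (by linarith) hM)
            (by filter_upwards [ae_restrict_mem measurableSet_Ioi] with s hs using
              Real.rpow_nonneg (le_of_lt (hM.trans hs)) _)]
          rw [integral_Ioi_rpow_of_lt (by linarith) hM]
          rw [show (-β + 1 : ℝ) = 1 - β by ring]
          congr 1
          rw [show (1 - β : ℝ) = -(β-1) by ring, div_neg, neg_div, neg_neg]
  refine le_trans (add_le_add h1 h2) ?_
  rw [hRpow M hM]
  have hM1 : M^(1-β) = M^(-β) * M := by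
    rw [show (1-β : ℝ) = -β+1 by ring, Real.rpow_add_one hM.ne']
  have hnn1 : (0:ℝ) ≤ γ^β * M^(-β) * Cn :=
    mul_nonneg (mul_nonneg (Real.rpow_nonneg hγ.le _) (Real.rpow_nonneg hM.le _)) hCn
  have hnn2 : (0:ℝ) ≤ Cn * γ^β :=
    mul_nonneg hCn (Real.rpow_nonneg hγ.le _)
  rw [← ENNReal.ofReal_mul hnn1, ← ENNReal.ofReal_mul hnn2,
    ← ENNReal.ofReal_add (mul_nonneg hnn1 hM.le)
      (mul_nonneg hnn2 (div_nonneg (Real.rpow_nonneg hM.le _) (by linarith)))]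
  apply ENNReal.ofReal_le_ofReal
  rw [hM1]
  apply le_of_eq
  field_simp

theorem statement6 (n m : ℕ) (hm : 2 ≤ 2*m) (hmn : 2*m < n + 1) :
    ∃ C : ℝ, 0 < C ∧
      ∀ f : EuclideanSpace ℝ (Fin n) → ℝ, Integrable f →
        ∀ lam : ℝ, 0 < lam →
          volume {X : Pt n | 0 < X.2 ∧ lam < |Nconv n m f X|} ≤
            ENNReal.ofReal
              (C * lam ^ (-(((n:ℝ) + 1)/((n:ℝ) - 2*m + 1))) *
                (∫ y, |f y|) ^ (((n:ℝ) + 1)/((n:ℝ) - 2*m + 1))) := by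
  have hn : 0 < n := by omega
  have h2mn : (2*(m:ℝ)) ≤ (n:ℝ) := by exact_mod_cast Nat.lt_succ_iff.mp hmn
  have h2m1 : (2:ℝ) ≤ 2*(m:ℝ) := by exact_mod_cast hm
  have h2a0 : (0:ℝ) < (n:ℝ) - 2*m + 1 := by linarith
  set a : ℝ := ((n:ℝ) - 2*m + 1)/2 with ha_def
  have ha : 0 < a := by rw [ha_def]; linarith
  set γ : ℝ := Real.pi ^ (((n:ℝ) + 1)/2) * Real.Gamma (((n:ℝ) - 2*m + 1)/2) / Real.Gamma (m:ℝ)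
    with hγ_def
  have hγ : 0 < γ := by
    apply div_pos (mul_pos (Real.rpow_pos_of_pos Real.pi_pos _) (Real.Gamma_pos_of_pos (by linarith)))
    exact Real.Gamma_pos_of_pos (by linarith)
  set β : ℝ := ((n:ℝ) + 1)/((n:ℝ) - 2*m + 1) with hβ_def
  have hβa : β = ((n:ℝ)+1)/(2*a) := by rw [hβ_def, ha_def]; congr 1; ring
  have hβ1 : 1 < β := by
    rw [hβ_def, lt_div_iff₀ h2a0]; linarith
  set Cn : ℝ := Real.sqrt Real.pi ^ n / Real.Gamma ((n:ℝ)/2+1) with hCn_def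
  have hCn : 0 < Cn :=
    div_pos (pow_pos (Real.sqrt_pos.mpr Real.pi_pos) n) (Real.Gamma_pos_of_pos (by positivity))
  have hd0 : (0:ℝ) < 1 + 1/(β-1) := by
    have hb : (0:ℝ) < β - 1 := by linarith
    positivity
  set C : ℝ := Cn * γ^β * (1 + 1/(β-1)) * 2^β with hC_def
  have hC : 0 < C := by
    have h1 := Real.rpow_pos_of_pos hγ β
    have h2 := Real.rpow_pos_of_pos (two_pos (α := ℝ)) β
    positivity
  refine ⟨C, hC, ?_⟩
  intro f hf lam hlam
  set L : ℝ := ∫ y, |f y| with hL_def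
  have hL0 : 0 ≤ L := integral_nonneg fun y => abs_nonneg _
  have hNk : ∀ (x : EuclideanSpace ℝ (Fin n)) (t : ℝ),
      Nker n m x t = γ * ((‖x‖^2 + t^2) ^ (-a)) := fun x t => rfl
  have hNknn : ∀ (x : EuclideanSpace ℝ (Fin n)) (t : ℝ), 0 ≤ Nker n m x t := fun x t => by
    rw [hNk]; exact mul_nonneg hγ.le (Real.rpow_nonneg (by positivity) _)
  rcases eq_or_lt_of_le hL0 with hL | hL
  · -- trivial case L = 0
    have hf0 : f =ᵐ[volume] 0 := by
      have habs : (fun y => |f y|) =ᵐ[volume] 0 :=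
        (integral_eq_zero_iff_of_nonneg (fun y => abs_nonneg _) hf.abs).mp
          (by rw [← hL_def]; exact hL.symm)
      filter_upwards [habs] with y hy
      simpa [abs_eq_zero] using hy
    have hzero : ∀ X : Pt n, Nconv n m f X = 0 := by
      intro X
      rw [Nconv]
      apply integral_eq_zero_of_ae
      filter_upwards [hf0] with y hy
      simp [hy]
    have hempty : {X : Pt n | 0 < X.2 ∧ lam < |Nconv n m f X|} = ∅ := by
      ext X
      simp only [Set.mem_setOf_eq, Set.mem_empty_iff_false, iff_false, not_and]
      intro _
      rw [hzero X, abs_zero]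
      exact not_lt.mpr hlam.le
    rw [hempty, measure_empty]
    exact bot_le
  · -- main case L > 0
    set M : ℝ := lam/(2*L) with hM_def
    have hM : 0 < M := div_pos hlam (by linarith)
    set T : ℝ := (γ/M)^(1/a) with hT_def
    have hT : 0 < T := Real.rpow_pos_of_pos (div_pos hγ hM) _
    set K2 : Pt n → ℝ := fun Z => if ‖Z.1‖^2 + Z.2^2 < T then Nker n m Z.1 Z.2 else 0
      with hK2_def
    have hK2nn : ∀ Z, 0 ≤ K2 Z := fun Z => by
      simp only [hK2_def]; split
      · exact hNknn _ _
      · exact le_rfl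
    have hK2le : ∀ Z : Pt n, K2 Z ≤ Nker n m Z.1 Z.2 := fun Z => by
      simp only [hK2_def]; split
      · exact le_rfl
      · exact hNknn _ _
    have hsplit : ∀ Z : Pt n, Nker n m Z.1 Z.2 ≤ M + K2 Z := by
      intro Z
      simp only [hK2_def]
      split
      · have := hNknn Z.1 Z.2
        linarith
      · rename_i h
        push_neg at h
        rw [hNk]
        have h1 : (‖Z.1‖^2 + Z.2^2) ^ (-a) ≤ T ^ (-a) :=
          Real.rpow_le_rpow_of_nonpos hT h (by linarith)
        have h2 : (T:ℝ) ^ (-a) = M/γ := by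
          rw [hT_def, ← Real.rpow_mul (by positivity),
            show (1/a) * (-a) = (-1:ℝ) by field_simp, Real.rpow_neg_one, inv_div]
        have h3 : γ * (‖Z.1‖^2 + Z.2^2) ^ (-a) ≤ M := by
          calc γ * (‖Z.1‖^2 + Z.2^2) ^ (-a) ≤ γ * (M/γ) := by
                rw [← h2]; exact mul_le_mul_of_nonneg_left h1 hγ.le
            _ = M := by field_simp
        linarith
    -- measurable version of f
    have hgsm := hf.1
    set g : EuclideanSpace ℝ (Fin n) → ℝ := hgsm.mk f with hg_def
    have hgm : Measurable g := hgsm.measurable_mk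
    have hfg : f =ᵐ[volume] g := hgsm.ae_eq_mk
    have hρm : Measurable (fun Z : Pt n => ‖Z.1‖^2 + Z.2^2) := by fun_prop
    have hNkm : Measurable (fun Z : Pt n => Nker n m Z.1 Z.2) := by
      simp only [hNk]
      exact (hρm.pow measurable_const).const_mul γ
    have hK2m : Measurable K2 := by
      rw [hK2_def]
      exact Measurable.ite (measurableSet_lt hρm measurable_const) hNkm measurable_const
    have hsubm : Measurable
        (fun p : Pt n × EuclideanSpace ℝ (Fin n) => ((p.1.1 - p.2, p.1.2) : Pt n)) := by
      fun_prop
    have hFm : Measurable (fun p : Pt n × EuclideanSpace ℝ (Fin n) =>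
        ENNReal.ofReal (K2 (p.1.1 - p.2, p.1.2)) * ENNReal.ofReal |g p.2|) :=
      ((hK2m.comp hsubm).ennreal_ofReal).mul ((hgm.comp measurable_snd).abs.ennreal_ofReal)
    set G : Pt n → ℝ≥0∞ :=
      fun X => ∫⁻ y, ENNReal.ofReal (K2 (X.1 - y, X.2)) * ENNReal.ofReal |g y| with hG_def
    have hGm : Measurable G := hFm.lintegral_prod_right'
    have hHmeas : MeasurableSet {X : Pt n | 0 < X.2} :=
      (isOpen_lt continuous_const continuous_snd).measurableSet
    -- pointwise step
    have hsubset : {X : Pt n | 0 < X.2 ∧ lam < |Nconv n m f X|}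
        ⊆ {X : Pt n | ENNReal.ofReal (lam/2) ≤ G X} ∩ {X : Pt n | 0 < X.2} := by
      rintro X ⟨hX2, hXl⟩
      refine ⟨?_, hX2⟩
      by_cases hint : Integrable (fun y => Nker n m (X.1 - y) X.2 * f y) volume
      swap
      · rw [Nconv, integral_undef hint, abs_zero] at hXl; linarith
      have habs_eq : (fun y => |Nker n m (X.1 - y) X.2 * f y|)
          = fun y => Nker n m (X.1 - y) X.2 * |f y| := by
        funext y; rw [abs_mul, abs_of_nonneg (hNknn _ _)]
      have hint2 : Integrable (fun y => Nker n m (X.1 - y) X.2 * |f y|) volume := by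
        rw [← habs_eq]; exact hint.abs
      have hK2f_meas : AEStronglyMeasurable (fun y => K2 (X.1 - y, X.2) * |f y|) volume := by
        refine AEStronglyMeasurable.mul ?_ hf.abs.1
        apply Measurable.aestronglyMeasurable
        exact hK2m.comp (by fun_prop)
      have hintK2 : Integrable (fun y => K2 (X.1 - y, X.2) * |f y|) volume := by
        refine hint2.mono' hK2f_meas ?_
        filter_upwards with y
        rw [Real.norm_eq_abs, abs_mul, abs_of_nonneg (hK2nn _), abs_abs]
        exact mul_le_mul_of_nonneg_right (hK2le (X.1 - y, X.2)) (abs_nonneg _)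
      have hb1 : |Nconv n m f X| ≤ ∫ y, Nker n m (X.1 - y) X.2 * |f y| := by
        rw [Nconv]
        calc |∫ y, Nker n m (X.1 - y) X.2 * f y|
            ≤ ∫ y, |Nker n m (X.1 - y) X.2 * f y| := by
              simpa only [Real.norm_eq_abs] using
                norm_integral_le_integral_norm (μ := volume)
                  (fun y => Nker n m (X.1 - y) X.2 * f y)
          _ = _ := by rw [habs_eq]
      have hb2 : ∫ y, Nker n m (X.1 - y) X.2 * |f y|
          ≤ M * L + ∫ y, K2 (X.1 - y, X.2) * |f y| := by
        have hmono : ∫ y, Nker n m (X.1 - y) X.2 * |f y|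
            ≤ ∫ y, (M * |f y| + K2 (X.1 - y, X.2) * |f y|) := by
          refine integral_mono hint2 ((hf.abs.const_mul M).add hintK2) ?_
          intro y
          have hs := hsplit (X.1 - y, X.2)
          calc Nker n m (X.1 - y) X.2 * |f y| ≤ (M + K2 (X.1 - y, X.2)) * |f y| :=
                mul_le_mul_of_nonneg_right hs (abs_nonneg _)
            _ = M * |f y| + K2 (X.1 - y, X.2) * |f y| := by ring
        rwa [integral_add (hf.abs.const_mul M) hintK2, integral_const_mul] at hmono
      have hML : M * L = lam/2 := by
        rw [hM_def]; field_simp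
      have h3 : lam/2 < ∫ y, K2 (X.1 - y, X.2) * |f y| := by
        have h4 := lt_of_lt_of_le hXl (hb1.trans hb2)
        rw [hML] at h4; linarith
      calc ENNReal.ofReal (lam/2) ≤ ENNReal.ofReal (∫ y, K2 (X.1 - y, X.2) * |f y|) :=
            ENNReal.ofReal_le_ofReal h3.le
        _ = ∫⁻ y, ENNReal.ofReal (K2 (X.1 - y, X.2) * |f y|) :=
            ofReal_integral_eq_lintegral_ofReal hintK2 (Filter.Eventually.of_forall fun y =>
              mul_nonneg (hK2nn _) (abs_nonneg _))
        _ = G X := by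
            simp only [hG_def]
            apply lintegral_congr_ae
            filter_upwards [hfg] with y hy
            rw [ENNReal.ofReal_mul (hK2nn _), hy]
    -- Markov
    have hc0 : (ENNReal.ofReal (lam/2)) ≠ 0 := by
      simp only [ne_eq, ENNReal.ofReal_eq_zero, not_le]
      linarith
    have hvol : volume {X : Pt n | 0 < X.2 ∧ lam < |Nconv n m f X|}
        ≤ (∫⁻ X in {X : Pt n | 0 < X.2}, G X) / ENNReal.ofReal (lam/2) := by
      refine le_trans (measure_mono hsubset) ?_
      rw [← Measure.restrict_apply' hHmeas]
      exact meas_ge_le_lintegral_div hGm.aemeasurable hc0 ENNReal.ofReal_ne_top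
    -- Tonelli
    have hswap : (∫⁻ X in {X : Pt n | 0 < X.2}, G X)
        = ∫⁻ y, (∫⁻ X in {X : Pt n | 0 < X.2},
            ENNReal.ofReal (K2 (X.1 - y, X.2))) * ENNReal.ofReal |g y| := by
      simp only [hG_def]
      rw [lintegral_lintegral_swap hFm.aemeasurable]
      refine lintegral_congr fun y => ?_
      exact lintegral_mul_const' _ _ ENNReal.ofReal_ne_top
    set A : ℝ := Cn * (γ^β * (M^(1-β) * (1 + 1/(β-1)))) with hA_def
    have hA0 : 0 ≤ A := by
      have h1 := Real.rpow_nonneg hγ.le β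
      have h2 := Real.rpow_nonneg hM.le (1-β)
      rw [hA_def]
      positivity
    have hJ : ∀ y, (∫⁻ X in {X : Pt n | 0 < X.2}, ENNReal.ofReal (K2 (X.1 - y, X.2)))
        ≤ ENNReal.ofReal A := by
      intro y
      exact auxJ n hn hγ ha hM hβa hβ1 y
    have hfinal1 : (∫⁻ X in {X : Pt n | 0 < X.2}, G X)
        ≤ ENNReal.ofReal A * ENNReal.ofReal L := by
      rw [hswap]
      calc (∫⁻ y, (∫⁻ X in {X : Pt n | 0 < X.2},
              ENNReal.ofReal (K2 (X.1 - y, X.2))) * ENNReal.ofReal |g y|)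
          ≤ ∫⁻ y, ENNReal.ofReal A * ENNReal.ofReal |g y| :=
            lintegral_mono fun y => mul_le_mul_left (hJ y) _
        _ = ENNReal.ofReal A * ∫⁻ y, ENNReal.ofReal |g y| :=
            lintegral_const_mul' _ _ ENNReal.ofReal_ne_top
        _ = ENNReal.ofReal A * ∫⁻ y, ENNReal.ofReal |f y| := by
            congr 1
            refine lintegral_congr_ae ?_
            filter_upwards [hfg] with y hy
            rw [hy]
        _ = ENNReal.ofReal A * ENNReal.ofReal L := by
            rw [← ofReal_integral_eq_lintegral_ofReal hf.abs
              (Filter.Eventually.of_forall fun y => abs_nonneg _)]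
    -- final numeric computation
    have hM_pow : M^(1-β) = lam^(1-β) * (2*L)^(β-1) := by
      rw [hM_def, Real.div_rpow hlam.le (by linarith), div_eq_mul_inv,
        ← Real.rpow_neg (by linarith), show -(1-β) = β-1 by ring]
    have h2L : (2*L)^(β-1) = 2^(β-1) * L^(β-1) := Real.mul_rpow (by norm_num) hL.le
    have hlam_pow : lam^(1-β) = lam^(-β) * lam := by
      rw [show (1-β:ℝ) = -β + 1 by ring, Real.rpow_add_one (ne_of_gt hlam)]
    have hL_pow : L^(β-1) * L = L^β := by
      have h5 := Real.rpow_add_one (ne_of_gt hL) (β-1)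
      rw [show (β-1)+1 = β by ring] at h5
      exact h5.symm
    have h2_pow : (2:ℝ)^(β-1) * 2 = 2^β := by
      have h5 := Real.rpow_add_one (two_ne_zero (α := ℝ)) (β-1)
      rw [show (β-1)+1 = β by ring] at h5
      exact h5.symm
    have hreal : A * L / (lam/2) = C * lam ^ (-β) * L ^ β := by
      rw [hA_def, hC_def, hM_pow, h2L, hlam_pow, ← hL_pow, ← h2_pow]
      field_simp
    refine hvol.trans ?_
    calc (∫⁻ X in {X : Pt n | 0 < X.2}, G X) / ENNReal.ofReal (lam/2)
        ≤ (ENNReal.ofReal A * ENNReal.ofReal L) / ENNReal.ofReal (lam/2) :=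
          ENNReal.div_le_div_right hfinal1 _
      _ = ENNReal.ofReal (A * L / (lam/2)) := by
          rw [← ENNReal.ofReal_mul hA0, ENNReal.ofReal_div_of_pos (x := A*L) (by linarith)]
      _ = ENNReal.ofReal (C * lam ^ (-β) * L ^ β) := by rw [hreal]
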